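/- (Langevin drift of the one-dimensional WN process.) The function θ ↦ f_WN(θ; μ, v∞) is differentiable on ℝ and the Langevin drift (σ²/2)·(d/dθ) log f_WN(θ; μ, v∞) equals the WN-process drift α·(μ − θ − ∑_{k ∈ ℤ} 2kπ·w_k(θ)) for every θ ∈ ℝ; in particular the series ∑_{k ∈ ℤ} 2kπ·w_k(θ) converges for every θ. -/

import Mathlib

open MeasureTheory Real

/-- Centered Gaussian density with variance `v` on `ℝ`. -/
noncomputable def gaussDens (v x : ℝ) : ℝ :=
  (Real.sqrt (2 * Real.pi * v))⁻¹ * Real.exp (-(x ^ 2) / (2 * v))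

/-- Wrapped normal density `f_WN(θ; μ, v)`. -/
noncomputable def fWN (μ v θ : ℝ) : ℝ :=
  ∑' k : ℤ, gaussDens v (θ - μ + 2 * (k : ℝ) * Real.pi)

/-- Winding-number weights `w_k(θ)` with stationary variance `v∞ = σ²/(2α)`. -/
noncomputable def wnWeight (α μ σ : ℝ) (k : ℤ) (θ : ℝ) : ℝ :=
  gaussDens (σ ^ 2 / (2 * α)) (θ - μ + 2 * (k : ℝ) * Real.pi) / fWN μ (σ ^ 2 / (2 * α)) θ

/-- Conditional mean `μ_t^m(θ_s) = μ + e^{−αt}(θ_s − μ + 2mπ)`. -/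
noncomputable def wouMean (α μ : ℝ) (t : ℝ) (m : ℤ) (θs : ℝ) : ℝ :=
  μ + Real.exp (-(α * t)) * (θs - μ + 2 * (m : ℝ) * Real.pi)

/-- Conditional variance `γ_t = σ²(1 − e^{−2αt})/(2α)`. -/
noncomputable def wouVar (α σ t : ℝ) : ℝ :=
  σ ^ 2 * (1 - Real.exp (-(2 * α * t))) / (2 * α)

/-- The WOU conditional density `p_t(θ | θ_s)`. -/
noncomputable def pWOU (α μ σ t θ θs : ℝ) : ℝ :=
  ∑' m : ℤ, wnWeight α μ σ m θs * fWN (wouMean α μ t m θs) (wouVar α σ t) θ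

lemma summable_exp_quad (w b : ℝ) (hw : 0 < w) :
    Summable (fun k : ℤ => Real.exp (-(b + 2 * (k : ℝ) * Real.pi) ^ 2 / w)) := by
  set r : ℝ := Real.exp (-1 / w) with hr_def
  have hr0 : (0:ℝ) < r := Real.exp_pos _
  have hr1 : r < 1 := by
    rw [hr_def, Real.exp_lt_one_iff]
    have : (0:ℝ) < 1 / w := by positivity
    rw [neg_div]
    linarith
  have hgeo : Summable (fun k : ℤ => r ^ k.natAbs) := by
    apply Summable.of_nat_of_neg
    · simpa using summable_geometric_of_lt_one hr0.le hr1
    · simpa using summable_geometric_of_lt_one hr0.le hr1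
  apply hgeo.of_norm_bounded_eventually
  have hev : ∀ᶠ k : ℤ in Filter.cofinite, ⌈|b|⌉₊ ≤ k.natAbs := by
    rw [Filter.eventually_cofinite]
    apply (Set.finite_Icc (-(⌈|b|⌉₊:ℤ)) (⌈|b|⌉₊:ℤ)).subset
    intro k hk
    simp only [Set.mem_setOf_eq, not_le] at hk
    simp only [Set.mem_Icc]
    omega
  filter_upwards [hev] with k hk
  have habs : ((k.natAbs : ℝ)) = |(k:ℝ)| := by rw [Nat.cast_natAbs, Int.cast_abs]
  have hb : |b| ≤ |(k:ℝ)| := by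
    calc |b| ≤ (⌈|b|⌉₊ : ℝ) := Nat.le_ceil _
    _ ≤ ((k.natAbs : ℝ)) := by exact_mod_cast hk
    _ = |(k:ℝ)| := habs
  have hpi : (1:ℝ) ≤ Real.pi := by linarith [Real.pi_gt_three]
  have h1 : |(k:ℝ)| ≤ |b + 2 * (k:ℝ) * Real.pi| := by
    have h2 : |2 * (k:ℝ) * Real.pi| = 2 * Real.pi * |(k:ℝ)| := by
      rw [abs_mul, abs_mul]
      rw [abs_of_nonneg (by norm_num : (0:ℝ) ≤ 2), abs_of_nonneg Real.pi_pos.le]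
      ring
    calc |(k:ℝ)| = 2 * 1 * |(k:ℝ)| - |(k:ℝ)| := by ring
    _ ≤ 2 * Real.pi * |(k:ℝ)| - |b| := by
        have := abs_nonneg (k:ℝ)
        nlinarith
    _ = |2 * (k:ℝ) * Real.pi| - |b| := by rw [h2]
    _ ≤ |b + 2 * (k:ℝ) * Real.pi| := by
        have := abs_sub_abs_le_abs_sub (2 * (k:ℝ) * Real.pi) (-b)
        simp only [abs_neg] at this
        calc |2 * (k:ℝ) * Real.pi| - |b| ≤ |2 * (k:ℝ) * Real.pi - -b| := this
        _ = |b + 2 * (k:ℝ) * Real.pi| := by ring_nf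
  have hksq : ((k.natAbs : ℝ)) ≤ (b + 2 * (k:ℝ) * Real.pi) ^ 2 := by
    have hk1 : |(k:ℝ)| = (k.natAbs : ℝ) := habs.symm
    have h3 : |(k:ℝ)| ^ 2 ≤ (b + 2 * (k:ℝ) * Real.pi) ^ 2 := by
      rw [← sq_abs (b + 2 * (k:ℝ) * Real.pi)]
      exact pow_le_pow_left₀ (abs_nonneg _) h1 2
    have h4 : (k.natAbs : ℝ) ≤ (k.natAbs : ℝ) ^ 2 := by
      have : (k.natAbs : ℝ) = 0 ∨ 1 ≤ (k.natAbs : ℝ) := by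
        rcases Nat.eq_zero_or_pos k.natAbs with h | h
        · left; exact_mod_cast h
        · right; exact_mod_cast h
      rcases this with h | h
      · simp [h]
      · nlinarith
    calc (k.natAbs : ℝ) ≤ (k.natAbs : ℝ) ^ 2 := h4
    _ = |(k:ℝ)| ^ 2 := by rw [hk1]
    _ ≤ _ := h3
  rw [Real.norm_eq_abs, abs_of_nonneg (Real.exp_pos _).le]
  calc Real.exp (-(b + 2 * (k:ℝ) * Real.pi) ^ 2 / w)
      ≤ Real.exp (-(k.natAbs : ℝ) / w) := by
        apply Real.exp_le_exp.mpr
        gcongr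
    _ = r ^ k.natAbs := by
        rw [hr_def, ← Real.exp_nat_mul]
        congr 1
        field_simp

lemma abs_mul_exp_le (v y : ℝ) (hv : 0 < v) :
    |y| * Real.exp (-(y ^ 2) / (2 * v)) ≤ (1 + 4 * v) * Real.exp (-(y ^ 2) / (4 * v)) := by
  have h1 : |y| ≤ 1 + y ^ 2 := by nlinarith [sq_nonneg (|y| - 1), sq_abs y, abs_nonneg y]
  have h4 : (0:ℝ) < 4 * v := by positivity
  have h2 : y ^ 2 ≤ 4 * v * Real.exp (y ^ 2 / (4 * v)) := by
    have h := Real.add_one_le_exp (y ^ 2 / (4 * v))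
    have h5 : y ^ 2 / (4 * v) ≤ Real.exp (y ^ 2 / (4 * v)) := by linarith
    calc y ^ 2 = y ^ 2 / (4 * v) * (4 * v) := by field_simp
    _ ≤ Real.exp (y ^ 2 / (4 * v)) * (4 * v) := mul_le_mul_of_nonneg_right h5 h4.le
    _ = 4 * v * Real.exp (y ^ 2 / (4 * v)) := by ring
  have hE : Real.exp (y ^ 2 / (4 * v)) * Real.exp (-(y ^ 2) / (2 * v))
      = Real.exp (-(y ^ 2) / (4 * v)) := by
    rw [← Real.exp_add]
    congr 1
    field_simp
    ring
  have hE2 : Real.exp (-(y ^ 2) / (2 * v)) ≤ Real.exp (-(y ^ 2) / (4 * v)) := by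
    apply Real.exp_le_exp.mpr
    rw [div_le_div_iff₀ (by positivity) (by positivity)]
    nlinarith [sq_nonneg y]
  calc |y| * Real.exp (-(y ^ 2) / (2 * v))
      ≤ (1 + y ^ 2) * Real.exp (-(y ^ 2) / (2 * v)) :=
        mul_le_mul_of_nonneg_right h1 (Real.exp_pos _).le
    _ = Real.exp (-(y ^ 2) / (2 * v)) + y ^ 2 * Real.exp (-(y ^ 2) / (2 * v)) := by ring
    _ ≤ Real.exp (-(y ^ 2) / (4 * v))
        + 4 * v * Real.exp (y ^ 2 / (4 * v)) * Real.exp (-(y ^ 2) / (2 * v)) := by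
        have := mul_le_mul_of_nonneg_right h2 (Real.exp_pos (-(y ^ 2) / (2 * v))).le
        linarith
    _ = Real.exp (-(y ^ 2) / (4 * v)) + 4 * v * Real.exp (-(y ^ 2) / (4 * v)) := by
        rw [mul_assoc, hE]
    _ = (1 + 4 * v) * Real.exp (-(y ^ 2) / (4 * v)) := by ring

/-- Langevin drift of the one-dimensional WN process: `f_WN(·; μ, σ²/(2α))` is
differentiable, the series `∑_k 2kπ·w_k(θ)` converges, and the Langevin drift
`(σ²/2)·(log f_WN)'(θ)` equals the WN drift `α(μ − θ − ∑_k 2kπ·w_k(θ))`. -/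
theorem wn_langevin_drift (α μ σ : ℝ) (hα : 0 < α) (hσ : 0 < σ) :
    (∀ θ : ℝ, DifferentiableAt ℝ (fun θ' : ℝ => fWN μ (σ ^ 2 / (2 * α)) θ') θ) ∧
    (∀ θ : ℝ, Summable (fun k : ℤ => 2 * (k : ℝ) * Real.pi * wnWeight α μ σ k θ)) ∧
    (∀ θ : ℝ,
      σ ^ 2 / 2 * deriv (fun θ' : ℝ => Real.log (fWN μ (σ ^ 2 / (2 * α)) θ')) θ =
        α * (μ - θ - ∑' k : ℤ, 2 * (k : ℝ) * Real.pi * wnWeight α μ σ k θ)) := by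
  set v : ℝ := σ ^ 2 / (2 * α) with hv_def
  have hv : 0 < v := div_pos (pow_pos hσ 2) (by linarith)
  set c : ℝ := (Real.sqrt (2 * Real.pi * v))⁻¹ with hc_def
  have hc : 0 < c := by
    rw [hc_def]
    have : (0:ℝ) < Real.sqrt (2 * Real.pi * v) :=
      Real.sqrt_pos.mpr (by positivity)
    positivity
  have hgauss : ∀ y : ℝ, gaussDens v y = c * Real.exp (-(y ^ 2) / (2 * v)) := fun y => rfl
  have hGpos : ∀ y : ℝ, 0 < gaussDens v y := fun y => by
    rw [hgauss]; positivity
  -- summability of the Gaussian series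
  have hsum_g : ∀ x : ℝ, Summable
      (fun k : ℤ => gaussDens v (x - μ + 2 * (k : ℝ) * Real.pi)) := by
    intro x
    apply ((summable_exp_quad (2 * v) (x - μ) (by positivity)).mul_left c).congr
    intro k
    rw [hgauss]
  have hfpos : ∀ x : ℝ, 0 < fWN μ v x := by
    intro x
    rw [fWN]
    exact Summable.tsum_pos (hsum_g x) (fun k => (hGpos _).le) 0 (hGpos _)
  -- termwise derivatives
  have hderiv_term : ∀ (k : ℤ) (x : ℝ),
      HasDerivAt (fun y : ℝ => gaussDens v (y - μ + 2 * (k : ℝ) * Real.pi))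
        (-((x - μ + 2 * (k : ℝ) * Real.pi) / v)
            * gaussDens v (x - μ + 2 * (k : ℝ) * Real.pi)) x := by
    intro k x
    have h1 : HasDerivAt (fun y : ℝ => y - μ + 2 * (k : ℝ) * Real.pi) 1 x := by
      simpa using ((hasDerivAt_id x).sub_const μ).add_const (2 * (k : ℝ) * Real.pi)
    have h2 := ((h1.pow 2).neg.div_const (2 * v)).exp.const_mul c
    have hfun : (fun y : ℝ => gaussDens v (y - μ + 2 * (k : ℝ) * Real.pi))
        = fun y : ℝ => c * Real.exp (-((y - μ + 2 * (k : ℝ) * Real.pi) ^ 2) / (2 * v)) :=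
      funext fun y => hgauss _
    rw [hfun]
    refine h2.congr_deriv ?_
    simp only [Pi.neg_apply, Pi.pow_apply, hgauss]
    field_simp
    ring
  -- uniform bound on the ball of radius 1
  have hbound : ∀ (θ : ℝ) (k : ℤ) (x : ℝ), x ∈ Metric.ball θ 1 →
      ‖-((x - μ + 2 * (k : ℝ) * Real.pi) / v)
          * gaussDens v (x - μ + 2 * (k : ℝ) * Real.pi)‖
        ≤ c / v * (1 + 4 * v) * Real.exp (1 / (4 * v))
            * Real.exp (-(θ - μ + 2 * (k : ℝ) * Real.pi) ^ 2 / (8 * v)) := by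
    intro θ k x hx
    have hxθ : (x - θ) ^ 2 ≤ 1 := by
      have h := Metric.mem_ball.mp hx
      rw [Real.dist_eq] at h
      nlinarith [abs_nonneg (x - θ), sq_abs (x - θ)]
    have hab : (θ - μ + 2 * (k : ℝ) * Real.pi) ^ 2 / 2 - 1
        ≤ (x - μ + 2 * (k : ℝ) * Real.pi) ^ 2 := by
      nlinarith [sq_nonneg ((x - μ + 2 * (k : ℝ) * Real.pi) - (θ - x)), hxθ]
    have hexp : Real.exp (-((x - μ + 2 * (k : ℝ) * Real.pi) ^ 2) / (4 * v))
        ≤ Real.exp (1 / (4 * v))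
            * Real.exp (-(θ - μ + 2 * (k : ℝ) * Real.pi) ^ 2 / (8 * v)) := by
      rw [← Real.exp_add]
      apply Real.exp_le_exp.mpr
      have heq : 1 / (4 * v) + -(θ - μ + 2 * (k : ℝ) * Real.pi) ^ 2 / (8 * v)
          = (2 - (θ - μ + 2 * (k : ℝ) * Real.pi) ^ 2) / (8 * v) := by
        field_simp
        ring
      rw [heq, div_le_div_iff₀ (by positivity) (by positivity)]
      nlinarith [hab, hv]
    have hnorm : ‖-((x - μ + 2 * (k : ℝ) * Real.pi) / v)
          * gaussDens v (x - μ + 2 * (k : ℝ) * Real.pi)‖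
        = c / v * (|x - μ + 2 * (k : ℝ) * Real.pi|
            * Real.exp (-((x - μ + 2 * (k : ℝ) * Real.pi) ^ 2) / (2 * v))) := by
      rw [Real.norm_eq_abs, abs_mul, abs_neg, abs_div, abs_of_pos hv,
        abs_of_pos (hGpos _), hgauss]
      ring
    rw [hnorm]
    calc c / v * (|x - μ + 2 * (k : ℝ) * Real.pi|
            * Real.exp (-((x - μ + 2 * (k : ℝ) * Real.pi) ^ 2) / (2 * v)))
        ≤ c / v * ((1 + 4 * v)
            * Real.exp (-((x - μ + 2 * (k : ℝ) * Real.pi) ^ 2) / (4 * v))) := by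
          apply mul_le_mul_of_nonneg_left (abs_mul_exp_le v _ hv) (by positivity)
      _ ≤ c / v * ((1 + 4 * v) * (Real.exp (1 / (4 * v))
            * Real.exp (-(θ - μ + 2 * (k : ℝ) * Real.pi) ^ 2 / (8 * v)))) := by
          apply mul_le_mul_of_nonneg_left
            (mul_le_mul_of_nonneg_left hexp (by positivity)) (by positivity)
      _ = c / v * (1 + 4 * v) * Real.exp (1 / (4 * v))
            * Real.exp (-(θ - μ + 2 * (k : ℝ) * Real.pi) ^ 2 / (8 * v)) := by ring
  -- summability of the bound
  have hsum_u : ∀ θ : ℝ, Summable (fun k : ℤ =>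
      c / v * (1 + 4 * v) * Real.exp (1 / (4 * v))
        * Real.exp (-(θ - μ + 2 * (k : ℝ) * Real.pi) ^ 2 / (8 * v))) := by
    intro θ
    apply ((summable_exp_quad (8 * v) (θ - μ) (by positivity)).mul_left
      (c / v * (1 + 4 * v) * Real.exp (1 / (4 * v)))).congr
    intro k
    rfl
  -- differentiability of fWN with termwise derivative
  have hder : ∀ θ : ℝ, HasDerivAt (fun x : ℝ => fWN μ v x)
      (∑' k : ℤ, -((θ - μ + 2 * (k : ℝ) * Real.pi) / v)
        * gaussDens v (θ - μ + 2 * (k : ℝ) * Real.pi)) θ := by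
    intro θ
    have h := hasDerivAt_tsum_of_isPreconnected
      (g := fun (k : ℤ) (y : ℝ) => gaussDens v (y - μ + 2 * (k : ℝ) * Real.pi))
      (g' := fun (k : ℤ) (y : ℝ) => -((y - μ + 2 * (k : ℝ) * Real.pi) / v)
        * gaussDens v (y - μ + 2 * (k : ℝ) * Real.pi))
      (hsum_u θ) Metric.isOpen_ball (convex_ball θ (1:ℝ)).isPreconnected
      (fun k y _ => hderiv_term k y)
      (fun k y hy => hbound θ k y hy)
      (Metric.mem_ball_self one_pos) (hsum_g θ) (Metric.mem_ball_self one_pos)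
    exact h
  have hsum_g' : ∀ θ : ℝ, Summable (fun k : ℤ =>
      -((θ - μ + 2 * (k : ℝ) * Real.pi) / v)
        * gaussDens v (θ - μ + 2 * (k : ℝ) * Real.pi)) := by
    intro θ
    exact Summable.of_norm_bounded (hsum_u θ)
      (fun k => hbound θ k θ (Metric.mem_ball_self one_pos))
  -- summability of the series ∑ 2kπ G_k
  have hsum_kG : ∀ θ : ℝ, Summable (fun k : ℤ =>
      2 * (k : ℝ) * Real.pi * gaussDens v (θ - μ + 2 * (k : ℝ) * Real.pi)) := by
    intro θ
    apply (((hsum_g' θ).mul_left (-v)).sub ((hsum_g θ).mul_left (θ - μ))).congr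
    intro k
    have hvne : v ≠ 0 := hv.ne'
    field_simp
    ring
  have hw_eq : ∀ (k : ℤ) (θ : ℝ), wnWeight α μ σ k θ
      = gaussDens v (θ - μ + 2 * (k : ℝ) * Real.pi) / fWN μ v θ := fun k θ => rfl
  refine ⟨fun θ => (hder θ).differentiableAt, ?_, ?_⟩
  · intro θ
    apply ((hsum_kG θ).div_const (fWN μ v θ)).congr
    intro k
    rw [hw_eq]
    ring
  · intro θ
    have hf0 : fWN μ v θ ≠ 0 := (hfpos θ).ne'
    have hlog := ((hder θ).log hf0).deriv
    rw [hlog]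
    have hts : ∑' k : ℤ, 2 * (k : ℝ) * Real.pi * wnWeight α μ σ k θ
        = (∑' k : ℤ, 2 * (k : ℝ) * Real.pi
            * gaussDens v (θ - μ + 2 * (k : ℝ) * Real.pi)) / fWN μ v θ := by
      rw [← tsum_div_const]
      apply tsum_congr
      intro k
      rw [hw_eq]
      ring
    have hD : (∑' k : ℤ, -((θ - μ + 2 * (k : ℝ) * Real.pi) / v)
          * gaussDens v (θ - μ + 2 * (k : ℝ) * Real.pi))
        = -(1 / v) * ((∑' k : ℤ, 2 * (k : ℝ) * Real.pi
            * gaussDens v (θ - μ + 2 * (k : ℝ) * Real.pi)) + (θ - μ) * fWN μ v θ) := by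
      have step1 : ∀ k : ℤ, -((θ - μ + 2 * (k : ℝ) * Real.pi) / v)
            * gaussDens v (θ - μ + 2 * (k : ℝ) * Real.pi)
          = -(1 / v) * (2 * (k : ℝ) * Real.pi
              * gaussDens v (θ - μ + 2 * (k : ℝ) * Real.pi)
            + (θ - μ) * gaussDens v (θ - μ + 2 * (k : ℝ) * Real.pi)) := by
        intro k
        have hvne : v ≠ 0 := hv.ne'
        field_simp
        ring
      calc (∑' k : ℤ, -((θ - μ + 2 * (k : ℝ) * Real.pi) / v)
            * gaussDens v (θ - μ + 2 * (k : ℝ) * Real.pi))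
          = ∑' k : ℤ, -(1 / v) * (2 * (k : ℝ) * Real.pi
              * gaussDens v (θ - μ + 2 * (k : ℝ) * Real.pi)
            + (θ - μ) * gaussDens v (θ - μ + 2 * (k : ℝ) * Real.pi)) :=
            tsum_congr step1
        _ = -(1 / v) * ∑' k : ℤ, (2 * (k : ℝ) * Real.pi
              * gaussDens v (θ - μ + 2 * (k : ℝ) * Real.pi)
            + (θ - μ) * gaussDens v (θ - μ + 2 * (k : ℝ) * Real.pi)) := tsum_mul_left
        _ = -(1 / v) * ((∑' k : ℤ, 2 * (k : ℝ) * Real.pi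
              * gaussDens v (θ - μ + 2 * (k : ℝ) * Real.pi))
            + ∑' k : ℤ, (θ - μ) * gaussDens v (θ - μ + 2 * (k : ℝ) * Real.pi)) := by
            rw [Summable.tsum_add (hsum_kG θ) ((hsum_g θ).mul_left (θ - μ))]
        _ = -(1 / v) * ((∑' k : ℤ, 2 * (k : ℝ) * Real.pi
              * gaussDens v (θ - μ + 2 * (k : ℝ) * Real.pi))
            + (θ - μ) * fWN μ v θ) := by
            rw [tsum_mul_left]
            rfl
    rw [hts, hD]
    have hveq : v = σ ^ 2 / (2 * α) := hv_def
    have hσ2 : σ ^ 2 = 2 * α * v := by rw [hv_def]; field_simp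
    have hvne : v ≠ 0 := hv.ne'
    rw [hσ2]
    generalize (∑' k : ℤ, 2 * (k : ℝ) * Real.pi * gaussDens v (θ - μ + 2 * (k : ℝ) * Real.pi)) = S
    field_simp
    ring
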